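/- For every n ≥ 3, the subgroup Q_{2^n} of the group of units of the real quaternions generated by the 2^(n−1)-th roots of unity (embedded via ℂ → ℍ) together with Q8 = {1, −1, i, −i, j, −j, k, −k} is isomorphic to the group with presentation ⟨x, y | x⁴ = 1, x² = y^(2^(n−2)), x y x⁻¹ = y⁻¹⟩, i.e. to Mathlib's QuaternionGroup (2^(n−2)); in particular it has order 2^n. -/

import Mathlib

open Quaternion Pointwise

/-- The quasicyclic 2-group `C_{2^∞}`: the subgroup of `ℂˣ` of all `z`
with `z ^ (2 ^ n) = 1` for some `n`. -/
def C2inf : Subgroup ℂˣ where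
  carrier := {z | ∃ n : ℕ, z ^ 2 ^ n = 1}
  one_mem' := ⟨0, one_pow _⟩
  mul_mem' := by
    rintro a b ⟨n, hn⟩ ⟨m, hm⟩
    exact ⟨n + m, by rw [mul_pow, pow_add, pow_mul, hn, one_pow, one_mul, pow_mul', hm, one_pow]⟩
  inv_mem' := by
    rintro a ⟨n, hn⟩
    exact ⟨n, by rw [inv_pow, hn, inv_one]⟩

/-- The canonical embedding of `ℂ` into the real quaternions `ℍ`. -/
noncomputable def complexToQuaternion : ℂ →ₐ[ℝ] ℍ[ℝ] :=
  Complex.lift ⟨⟨0, 1, 0, 0⟩, by ext <;> (repeat' first | erw [Quaternion.re_mul] | erw [Quaternion.imI_mul] | erw [Quaternion.imJ_mul] | erw [Quaternion.imK_mul] | erw [Quaternion.re_neg] | erw [Quaternion.imI_neg] | erw [Quaternion.imJ_neg] | erw [Quaternion.imK_neg]) <;> simp⟩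

/-- The quaternion `i` as a unit of `ℍ`. -/
noncomputable def quatI : ℍ[ℝ]ˣ := ⟨⟨0, 1, 0, 0⟩, -⟨0, 1, 0, 0⟩, by ext <;> (repeat' first | erw [Quaternion.re_mul] | erw [Quaternion.imI_mul] | erw [Quaternion.imJ_mul] | erw [Quaternion.imK_mul] | erw [Quaternion.re_neg] | erw [Quaternion.imI_neg] | erw [Quaternion.imJ_neg] | erw [Quaternion.imK_neg]) <;> simp, by ext <;> (repeat' first | erw [Quaternion.re_mul] | erw [Quaternion.imI_mul] | erw [Quaternion.imJ_mul] | erw [Quaternion.imK_mul] | erw [Quaternion.re_neg] | erw [Quaternion.imI_neg] | erw [Quaternion.imJ_neg] | erw [Quaternion.imK_neg]) <;> simp⟩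

/-- The quaternion `j` as a unit of `ℍ`. -/
noncomputable def quatJ : ℍ[ℝ]ˣ := ⟨⟨0, 0, 1, 0⟩, -⟨0, 0, 1, 0⟩, by ext <;> (repeat' first | erw [Quaternion.re_mul] | erw [Quaternion.imI_mul] | erw [Quaternion.imJ_mul] | erw [Quaternion.imK_mul] | erw [Quaternion.re_neg] | erw [Quaternion.imI_neg] | erw [Quaternion.imJ_neg] | erw [Quaternion.imK_neg]) <;> simp, by ext <;> (repeat' first | erw [Quaternion.re_mul] | erw [Quaternion.imI_mul] | erw [Quaternion.imJ_mul] | erw [Quaternion.imK_mul] | erw [Quaternion.re_neg] | erw [Quaternion.imI_neg] | erw [Quaternion.imJ_neg] | erw [Quaternion.imK_neg]) <;> simp⟩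

/-- The quaternion `k` as a unit of `ℍ`. -/
noncomputable def quatK : ℍ[ℝ]ˣ := ⟨⟨0, 0, 0, 1⟩, -⟨0, 0, 0, 1⟩, by ext <;> (repeat' first | erw [Quaternion.re_mul] | erw [Quaternion.imI_mul] | erw [Quaternion.imJ_mul] | erw [Quaternion.imK_mul] | erw [Quaternion.re_neg] | erw [Quaternion.imI_neg] | erw [Quaternion.imJ_neg] | erw [Quaternion.imK_neg]) <;> simp, by ext <;> (repeat' first | erw [Quaternion.re_mul] | erw [Quaternion.imI_mul] | erw [Quaternion.imJ_mul] | erw [Quaternion.imK_mul] | erw [Quaternion.re_neg] | erw [Quaternion.imI_neg] | erw [Quaternion.imJ_neg] | erw [Quaternion.imK_neg]) <;> simp⟩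

/-- The 8-element quaternion group `Q₈ = {1, -1, i, -i, j, -j, k, -k}` as a set of
units of `ℍ`. -/
noncomputable def Q8 : Set ℍ[ℝ]ˣ := {1, -1, quatI, -quatI, quatJ, -quatJ, quatK, -quatK}

/-- The infinite generalized quaternion group `Q_{2^∞}`: the subgroup of `ℍˣ` generated by
the image of `C_{2^∞}` under the embedding `ℂ → ℍ` together with `Q₈`. -/
noncomputable def Q2inf : Subgroup ℍ[ℝ]ˣ :=
  Subgroup.closure ((Units.map complexToQuaternion.toMonoidHom) '' (C2inf : Set ℂˣ) ∪ Q8)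

/-- The quasicyclic group `C_{2^∞}` viewed as a subgroup of `ℍˣ` via the embedding `ℂ → ℍ`. -/
noncomputable def C2infH : Subgroup ℍ[ℝ]ˣ :=
  Subgroup.map (Units.map complexToQuaternion.toMonoidHom) C2inf

/-- The finite generalized quaternion group `Q_{2^n}`: the subgroup of `ℍˣ` generated by
the complex `2 ^ (n - 1)`-th roots of unity (embedded via `ℂ → ℍ`) together with `Q₈`. -/
noncomputable def Qfin (n : ℕ) : Subgroup ℍ[ℝ]ˣ :=
  Subgroup.closure
    ((Units.map complexToQuaternion.toMonoidHom) '' {z : ℂˣ | z ^ 2 ^ (n - 1) = 1} ∪ Q8)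


noncomputable def fH : ℂˣ →* ℍ[ℝ]ˣ := Units.map complexToQuaternion.toMonoidHom

lemma complexToQuaternion_apply (z : ℂ) :
    complexToQuaternion z = (⟨z.re, z.im, 0, 0⟩ : ℍ[ℝ]) := by
  have h : (⟨0,1,0,0⟩ : ℍ[ℝ]) * ⟨0,1,0,0⟩ = -1 := by ext <;> simp
  have : complexToQuaternion z = Complex.liftAux (⟨0,1,0,0⟩ : ℍ[ℝ]) h z := rfl
  rw [this, Complex.liftAux_apply]
  ext <;> simp

lemma fH_injective : Function.Injective fH :=
  Units.map_injective complexToQuaternion.injective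

lemma comm_lemma (z : ℂ) :
    complexToQuaternion z * ((quatJ : ℍ[ℝ]ˣ) : ℍ[ℝ]) =
      (quatJ : ℍ[ℝ]ˣ) * complexToQuaternion ((starRingEnd ℂ) z) := by
  simp only [complexToQuaternion_apply, quatJ]
  ext <;> (repeat' first | erw [Quaternion.re_mul] | erw [Quaternion.imI_mul] | erw [Quaternion.imJ_mul] | erw [Quaternion.imK_mul] | erw [Quaternion.re_neg] | erw [Quaternion.imI_neg] | erw [Quaternion.imJ_neg] | erw [Quaternion.imK_neg]) <;> simp <;> ring

section Zeta
variable (m : ℕ) [NeZero m]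

noncomputable def zetaC : ℂ := Complex.exp (2 * Real.pi * Complex.I / (2 * m))

lemma zetaC_prim : IsPrimitiveRoot (zetaC m) (2 * m) := by
  have : ((2 * m : ℕ) : ℂ) = 2 * m := by push_cast; ring
  simpa [zetaC, this] using Complex.isPrimitiveRoot_exp (2 * m)
    (Nat.mul_ne_zero two_ne_zero (NeZero.ne m))

noncomputable def zetaU : ℂˣ := ((zetaC_prim m).isUnit (Nat.mul_ne_zero two_ne_zero (NeZero.ne m))).unit

lemma zetaU_val : ((zetaU m : ℂˣ) : ℂ) = zetaC m := rfl

lemma zetaU_prim : IsPrimitiveRoot (zetaU m) (2 * m) :=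
  (zetaC_prim m).isUnit_unit (Nat.mul_ne_zero two_ne_zero (NeZero.ne m))

noncomputable def zeta : ℍ[ℝ]ˣ := fH (zetaU m)

lemma orderOf_zeta : orderOf (zeta m) = 2 * m := by
  rw [zeta, orderOf_injective fH fH_injective, ← (zetaU_prim m).eq_orderOf]

lemma zeta_pow_2m : zeta m ^ (2 * m) = 1 := by
  rw [← orderOf_zeta m, pow_orderOf_eq_one]

lemma zetaC_pow_m : zetaC m ^ m = -1 := by
  have hm : (m : ℂ) ≠ 0 := by exact_mod_cast (NeZero.ne m)
  rw [zetaC, ← Complex.exp_nat_mul]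
  have : (m : ℂ) * (2 * Real.pi * Complex.I / (2 * m)) = Real.pi * Complex.I := by
    field_simp
  rw [this, Complex.exp_pi_mul_I]

lemma zetaU_pow_m : zetaU m ^ m = -1 := by
  ext; push_cast [zetaU_val]; exact zetaC_pow_m m

lemma zeta_pow_m : zeta m ^ m = -1 := by
  rw [zeta, ← map_pow, zetaU_pow_m]
  apply Units.ext
  show complexToQuaternion (((-1 : ℂˣ) : ℂ)) = _
  simp only [Units.val_neg, Units.val_one, map_neg, map_one]

end Zeta

lemma quatJ_sq : (quatJ : ℍ[ℝ]ˣ) * quatJ = -1 := by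
  apply Units.ext
  simp only [Units.val_mul, Units.val_neg, Units.val_one, quatJ]
  ext <;> (repeat' first | erw [Quaternion.re_mul] | erw [Quaternion.imI_mul] | erw [Quaternion.imJ_mul] | erw [Quaternion.imK_mul] | erw [Quaternion.re_neg] | erw [Quaternion.imI_neg] | erw [Quaternion.imJ_neg] | erw [Quaternion.imK_neg]) <;> simp

lemma zetaU_inv_val (m : ℕ) [NeZero m] :
    (((zetaU m)⁻¹ : ℂˣ) : ℂ) = (starRingEnd ℂ) (zetaC m) := by
  have h2m : (2 * m : ℕ) ≠ 0 := Nat.mul_ne_zero two_ne_zero (NeZero.ne m)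
  have habs : ‖zetaC m‖ = 1 :=
    Complex.norm_eq_one_of_pow_eq_one (zetaC_prim m).pow_eq_one h2m
  rw [Units.val_inv_eq_inv_val, zetaU_val, Complex.inv_eq_conj habs]

lemma zeta_mul_J (m : ℕ) [NeZero m] :
    zeta m * quatJ = quatJ * (zeta m)⁻¹ := by
  apply Units.ext
  simp only [Units.val_mul]
  have h1 : ((zeta m : ℍ[ℝ]ˣ) : ℍ[ℝ]) = complexToQuaternion (zetaC m) := rfl
  have h2 : (((zeta m)⁻¹ : ℍ[ℝ]ˣ) : ℍ[ℝ]) = complexToQuaternion (((zetaU m)⁻¹ : ℂˣ) : ℂ) := rfl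
  rw [h1, h2, zetaU_inv_val, comm_lemma]

section Phi
variable (m : ℕ) [NeZero m]

instance : NeZero (2 * m) := ⟨Nat.mul_ne_zero two_ne_zero (NeZero.ne m)⟩

lemma zeta_pow_mod (x : ℕ) : zeta m ^ (x % (2 * m)) = zeta m ^ x := by
  conv_rhs => rw [← Nat.div_add_mod x (2 * m)]
  rw [pow_add, pow_mul, zeta_pow_2m, one_pow, one_mul]

lemma zeta_pow_val_add (i j : ZMod (2 * m)) :
    zeta m ^ (i + j).val = zeta m ^ i.val * zeta m ^ j.val := by
  rw [ZMod.val_add, zeta_pow_mod, pow_add]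

lemma zeta_pow_val_sub (i j : ZMod (2 * m)) :
    zeta m ^ (j - i).val = zeta m ^ j.val * (zeta m ^ i.val)⁻¹ := by
  rw [eq_mul_inv_iff_mul_eq, ← zeta_pow_val_add, sub_add_cancel]

lemma pow_mul_J (x : ℕ) : zeta m ^ x * quatJ = quatJ * (zeta m)⁻¹ ^ x := by
  induction x with
  | zero => simp
  | succ k ih =>
    rw [pow_succ, mul_assoc, zeta_mul_J, ← mul_assoc, ih, mul_assoc, ← pow_succ]

noncomputable def phi : QuaternionGroup m →* ℍ[ℝ]ˣ :=
  MonoidHom.mk' (fun g => match g with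
    | QuaternionGroup.a i => zeta m ^ i.val
    | QuaternionGroup.xa i => quatJ * zeta m ^ i.val)
  (by
    have hcomm : ∀ x y : ℕ, Commute (zeta m ^ x) (zeta m ^ y) :=
      fun x y => (Commute.refl (zeta m)).pow_pow x y
    rintro (i | i) (j | j)
    · exact zeta_pow_val_add m i j
    · show quatJ * zeta m ^ (j - i).val = zeta m ^ i.val * (quatJ * zeta m ^ j.val)
      calc quatJ * zeta m ^ (j - i).val
          = quatJ * (zeta m ^ j.val * (zeta m ^ i.val)⁻¹) := by rw [zeta_pow_val_sub]
        _ = quatJ * ((zeta m ^ i.val)⁻¹ * zeta m ^ j.val) := by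
              rw [((hcomm i.val j.val).inv_left).eq]
        _ = (quatJ * (zeta m)⁻¹ ^ i.val) * zeta m ^ j.val := by rw [inv_pow, mul_assoc]
        _ = (zeta m ^ i.val * quatJ) * zeta m ^ j.val := by rw [pow_mul_J]
        _ = zeta m ^ i.val * (quatJ * zeta m ^ j.val) := mul_assoc _ _ _
    · show quatJ * zeta m ^ (i + j).val = (quatJ * zeta m ^ i.val) * zeta m ^ j.val
      rw [zeta_pow_val_add, mul_assoc]
    · show zeta m ^ (((m : ZMod (2 * m))) + j - i).val
          = (quatJ * zeta m ^ i.val) * (quatJ * zeta m ^ j.val)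
      have hval : ((m : ZMod (2 * m))).val = m :=
        ZMod.val_natCast_of_lt (by have := NeZero.ne m; omega)
      have hrhs : (quatJ * zeta m ^ i.val) * (quatJ * zeta m ^ j.val)
          = -((zeta m ^ i.val)⁻¹ * zeta m ^ j.val) := by
        rw [mul_assoc, ← mul_assoc (zeta m ^ i.val), pow_mul_J, ← mul_assoc,
          ← mul_assoc, quatJ_sq, inv_pow, mul_assoc, neg_one_mul]
      rw [hrhs, zeta_pow_val_sub, zeta_pow_val_add, hval, zeta_pow_m,
        ((hcomm i.val j.val).inv_left).eq, neg_one_mul, neg_mul])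

end Phi

lemma zeta_pow_form (m : ℕ) [NeZero m] (x : ℕ) :
    ∃ a b : ℝ, ((zeta m ^ x : ℍ[ℝ]ˣ) : ℍ[ℝ]) = ⟨a, b, 0, 0⟩ := by
  induction x with
  | zero => exact ⟨1, 0, by ext <;> simp⟩
  | succ k ih =>
    obtain ⟨a, b, hab⟩ := ih
    have hz : ((zeta m : ℍ[ℝ]ˣ) : ℍ[ℝ]) = complexToQuaternion (zetaC m) := rfl
    refine ⟨a * (zetaC m).re - b * (zetaC m).im, a * (zetaC m).im + b * (zetaC m).re, ?_⟩
    rw [pow_succ, Units.val_mul, hab, hz, complexToQuaternion_apply]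
    ext <;> (repeat' first | erw [Quaternion.re_mul] | erw [Quaternion.imI_mul] | erw [Quaternion.imJ_mul] | erw [Quaternion.imK_mul] | erw [Quaternion.re_neg] | erw [Quaternion.imI_neg] | erw [Quaternion.imJ_neg] | erw [Quaternion.imK_neg]) <;> simp <;> ring

lemma phi_injective (m : ℕ) [NeZero m] : Function.Injective (phi m) := by
  rw [injective_iff_map_eq_one]
  rintro (i | i) h
  · have h1 : zeta m ^ i.val = 1 := h
    have hd : 2 * m ∣ i.val := by
      have := orderOf_dvd_of_pow_eq_one h1
      rwa [orderOf_zeta m] at this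
    have hv : i.val = 0 := Nat.eq_zero_of_dvd_of_lt hd (ZMod.val_lt i)
    rw [QuaternionGroup.one_def]
    exact congrArg QuaternionGroup.a ((ZMod.val_eq_zero i).mp hv)
  · exfalso
    have h1 : quatJ * zeta m ^ i.val = 1 := h
    obtain ⟨a, b, hab⟩ := zeta_pow_form m i.val
    have h2 := congrArg (fun u : ℍ[ℝ]ˣ => ((u : ℍ[ℝ])).re) h1
    simp only [Units.val_mul, hab, quatJ, Units.val_one] at h2
    erw [Quaternion.re_mul] at h2
    simp at h2

instance (k : ℕ) : NeZero (2 ^ k) := ⟨pow_ne_zero _ two_ne_zero⟩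

noncomputable def unitI : ℂˣ :=
  ⟨Complex.I, -Complex.I, by simp [Complex.I_mul_I], by simp [Complex.I_mul_I]⟩

lemma fH_unitI : fH unitI = quatI :=
  Units.ext (by
    show complexToQuaternion Complex.I = _
    rw [complexToQuaternion_apply]
    simp [quatI]
    rfl)

lemma fH_negone : fH (-1) = -1 :=
  Units.ext (by
    show complexToQuaternion ((-1 : ℂˣ) : ℂ) = _
    simp)

lemma quatI_mul_quatJ : (quatI : ℍ[ℝ]ˣ) * quatJ = quatK :=
  Units.ext (by
    show ((quatI : ℍ[ℝ]ˣ) : ℍ[ℝ]) * quatJ = quatK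
    simp only [quatI, quatJ, quatK]
    ext <;> (repeat' first | erw [Quaternion.re_mul] | erw [Quaternion.imI_mul] | erw [Quaternion.imJ_mul] | erw [Quaternion.imK_mul] | erw [Quaternion.re_neg] | erw [Quaternion.imI_neg] | erw [Quaternion.imJ_neg] | erw [Quaternion.imK_neg]) <;> simp)

lemma phi_range (n : ℕ) (hn : 3 ≤ n) : (phi (2 ^ (n - 2))).range = Qfin n := by
  set m := 2 ^ (n - 2) with hm
  have h2m : 2 * m = 2 ^ (n - 1) := by
    rw [hm, ← pow_succ']
    congr 1
    omega
  -- image roots are in range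
  have himg : ∀ z : ℂˣ, z ^ (2 * m) = 1 → fH z ∈ (phi m).range := by
    intro z hz
    have hzc : ((z : ℂˣ) : ℂ) ^ (2 * m) = 1 := by
      rw [← Units.val_pow_eq_pow_val, hz, Units.val_one]
    obtain ⟨i, -, hi⟩ := (zetaC_prim m).eq_pow_of_pow_eq_one hzc
    have hz' : z = zetaU m ^ i := by
      ext
      rw [Units.val_pow_eq_pow_val, zetaU_val, hi]
    refine ⟨QuaternionGroup.a (i : ZMod (2 * m)), ?_⟩
    show zeta m ^ ((i : ZMod (2 * m))).val = fH z
    rw [hz', map_pow, ZMod.val_natCast, zeta_pow_mod]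
    rfl
  have hneg : (-1 : ℍ[ℝ]ˣ) ∈ (phi m).range := by
    have h1 : ((-1 : ℂˣ)) ^ (2 * m) = 1 := by rw [pow_mul, neg_one_sq, one_pow]
    have := himg (-1) h1
    rwa [fH_negone] at this
  have hI : quatI ∈ (phi m).range := by
    have h1 : unitI ^ (2 * m) = 1 := by
      have h4 : 2 * m = 4 * 2 ^ (n - 3) := by
        rw [h2m, show n - 1 = (n - 3) + 2 by omega, pow_add]
        ring
      ext
      rw [Units.val_pow_eq_pow_val, h4, pow_mul]
      show (Complex.I ^ 4) ^ _ = 1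
      simp [Complex.I_pow_four]
    have := himg unitI h1
    rwa [fH_unitI] at this
  have hJ : quatJ ∈ (phi m).range := by
    refine ⟨QuaternionGroup.xa 0, ?_⟩
    show quatJ * zeta m ^ ((0 : ZMod (2 * m))).val = quatJ
    rw [ZMod.val_zero, pow_zero, mul_one]
  have hK : quatK ∈ (phi m).range := by
    rw [← quatI_mul_quatJ]; exact mul_mem hI hJ
  apply le_antisymm
  · rintro x ⟨g, rfl⟩
    have hζ : zeta m ∈ Qfin n := by
      apply Subgroup.subset_closure
      left
      exact ⟨zetaU m, by
        show zetaU m ^ 2 ^ (n - 1) = 1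
        rw [← h2m]
        exact (zetaU_prim m).pow_eq_one, rfl⟩
    have hJ' : quatJ ∈ Qfin n := Subgroup.subset_closure (Or.inr (by simp [Q8]))
    rcases g with i | i
    · exact pow_mem hζ i.val
    · exact mul_mem hJ' (pow_mem hζ i.val)
  · rw [Qfin, Subgroup.closure_le]
    rintro x (⟨z, hz, rfl⟩ | hq8)
    · exact himg z (by rw [h2m]; exact hz)
    · have hnegmul : ∀ u : ℍ[ℝ]ˣ, u ∈ (phi m).range → -u ∈ (phi m).range := by
        intro u hu
        rw [show -u = -1 * u from (neg_one_mul u).symm]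
        exact mul_mem hneg hu
      simp only [Q8, Set.mem_insert_iff, Set.mem_singleton_iff] at hq8
      rcases hq8 with rfl | rfl | rfl | rfl | rfl | rfl | rfl | rfl
      · exact one_mem _
      · exact hneg
      · exact hI
      · exact hnegmul _ hI
      · exact hJ
      · exact hnegmul _ hJ
      · exact hK
      · exact hnegmul _ hK


/-- For `n ≥ 3`, the subgroup `Q_{2^n}` of `ℍˣ` is isomorphic to the generalized
quaternion group `QuaternionGroup (2 ^ (n - 2))` (the group with presentation
`⟨x, y | x⁴ = 1, x² = y^(2^(n-2)), x y x⁻¹ = y⁻¹⟩`); in particular it has order `2 ^ n`. -/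
theorem stmt_16 (n : ℕ) (hn : 3 ≤ n) :
    Nonempty (Qfin n ≃* QuaternionGroup (2 ^ (n - 2))) ∧ Nat.card (Qfin n) = 2 ^ n := by
  have e : QuaternionGroup (2 ^ (n - 2)) ≃* Qfin n :=
    (MonoidHom.ofInjective (phi_injective (2 ^ (n - 2)))).trans
      (MulEquiv.subgroupCongr (phi_range n hn))
  refine ⟨⟨e.symm⟩, ?_⟩
  rw [← Nat.card_congr e.toEquiv, Nat.card_eq_fintype_card, QuaternionGroup.card]
  rw [show (4 : ℕ) = 2 ^ 2 from rfl, ← pow_add]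
  congr 1
  omega
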